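/- Let F be a field and let L be a left Leibniz algebra over F with dim_F L = 3 which is not a Lie algebra. Assume Leib(L) ⊄ ζ(L), dim_F Leib(L) = 1, and L/Leib(L) is abelian. Then there exists a basis (a1, a2, a3) of L such that the bracket is given by one of the following multiplication tables (all brackets of basis vectors not listed being zero): (i) [a1,a1] = [a1,a3] = a3; (ii) [a1,a1] = [a1,a2] = [a1,a3] = a3; (iii) [a1,a1] = [a1,a3] = [a2,a1] = [a2,a3] = a3; (iv) [a1,a1] = [a1,a3] = a3 and [a2,a2] = σ·a3 for some σ ∈ F, σ ≠ 0, and for all α, β, γ ∈ F with β ≠ 0 one has α² + αγ + β²σ ≠ 0; (v) [a1,a1] = [a1,a2] = [a1,a3] = a3 and [a2,a2] = τ·a3 for some τ ∈ F, τ ≠ 0, and for all α, β, γ ∈ F with β ≠ 0 one has α² + αβ + αγ + β²τ ≠ 0; (vi) [a1,a1] = [a1,a3] = [a2,a1] = [a2,a3] = a3 and [a2,a2] = τ·a3 for some τ ∈ F, τ ≠ 0, and for all α, β, γ ∈ F with β ≠ 0 one has α² + αγ + αβ + β²τ + βγ ≠ 0; (vii) [a1,a1] = [a1,a3] = [a2,a1]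 = [a2,a3] = a3, [a1,a2] = δ·a3, [a2,a2] = τ·a3 for some δ, τ ∈ F with δ ≠ 0, τ ≠ 0, and for all α, β, γ ∈ F with β ≠ 0 one has α² + αβδ + αγ + αβ + β²τ + βγ ≠ 0. -/

import Mathlib

open Module Polynomial

variable {F L : Type*} [Field F] [AddCommGroup L] [Module F L]

/-- The left Leibniz identity for a bilinear bracket. -/
def IsLeibniz (β : L →ₗ[F] L →ₗ[F] L) : Prop :=
  ∀ a b c : L, β (β a b) c = β a (β b c) - β b (β a c)

/-- The Leibniz kernel `Leib(L)`: the subspace spanned by all squares `[a,a]`. -/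
def leibKer (β : L →ₗ[F] L →ₗ[F] L) : Submodule F L :=
  Submodule.span F (Set.range fun a => β a a)

/-- The center `ζ(L)` of a Leibniz algebra. -/
def lzCenter (β : L →ₗ[F] L →ₗ[F] L) : Submodule F L where
  carrier := {x | ∀ y, β x y = 0 ∧ β y x = 0}
  add_mem' := by
    intro a b ha hb y
    refine ⟨?_, ?_⟩
    · rw [map_add, LinearMap.add_apply, (ha y).1, (hb y).1, add_zero]
    · rw [map_add, (ha y).2, (hb y).2, add_zero]
  zero_mem' := by
    intro y
    refine ⟨?_, ?_⟩ <;> simp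
  smul_mem' := by
    intro c a ha y
    refine ⟨?_, ?_⟩
    · rw [map_smul, LinearMap.smul_apply, (ha y).1, smul_zero]
    · rw [map_smul, (ha y).2, smul_zero]

/-- The derived subalgebra `[L,L]`. -/
def leibDerived (β : L →ₗ[F] L →ₗ[F] L) : Submodule F L :=
  Submodule.span F {x | ∃ a b : L, β a b = x}

/-- The lower central series: `leibGamma β 1 = ⊤`, `leibGamma β (k+1) = [L, leibGamma β k]`. -/
def leibGamma (β : L →ₗ[F] L →ₗ[F] L) : ℕ → Submodule F L
  | 0 => ⊤
  | 1 => ⊤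
  | (n+2) => Submodule.span F {x | ∃ a b : L, b ∈ leibGamma β (n+1) ∧ β a b = x}

/-- The derived series: `leibDelta β 0 = ⊤`, `leibDelta β (n+1) = [leibDelta β n, leibDelta β n]`. -/
def leibDelta (β : L →ₗ[F] L →ₗ[F] L) : ℕ → Submodule F L
  | 0 => ⊤
  | (n+1) => Submodule.span F
      {x | ∃ a ∈ leibDelta β n, ∃ b ∈ leibDelta β n, β a b = x}

/-- Multiplication table predicate: the brackets of the triple `a` are given by `t`. -/
def MulTbl (β : L →ₗ[F] L →ₗ[F] L) (a : Fin 3 → L) (t : Fin 3 → Fin 3 → L) : Prop :=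
  ∀ i j, β (a i) (a j) = t i j

theorem stmt3 (β : L →ₗ[F] L →ₗ[F] L) (hLeib : IsLeibniz β)
    (hdim : finrank F L = 3) (hnotLie : ∃ a : L, β a a ≠ 0)
    (hnsub : ¬ leibKer β ≤ lzCenter β) (hk : finrank F (leibKer β) = 1)
    (hab : ∀ a b : L, β a b ∈ leibKer β) :
    ∃ b : Basis (Fin 3) F L,
      MulTbl β ⇑b ![![b 2, 0, b 2], ![0, 0, 0], ![0, 0, 0]] ∨
      MulTbl β ⇑b ![![b 2, b 2, b 2], ![0, 0, 0], ![0, 0, 0]] ∨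
      MulTbl β ⇑b ![![b 2, 0, b 2], ![b 2, 0, b 2], ![0, 0, 0]] ∨
      (∃ σ : F, σ ≠ 0 ∧ (∀ α β' γ : F, β' ≠ 0 → α ^ 2 + α * γ + β' ^ 2 * σ ≠ 0) ∧
        MulTbl β ⇑b ![![b 2, 0, b 2], ![0, σ • b 2, 0], ![0, 0, 0]]) ∨
      (∃ τ : F, τ ≠ 0 ∧ (∀ α β' γ : F, β' ≠ 0 → α ^ 2 + α * β' + α * γ + β' ^ 2 * τ ≠ 0) ∧
        MulTbl β ⇑b ![![b 2, b 2, b 2], ![0, τ • b 2, 0], ![0, 0, 0]]) ∨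
      (∃ τ : F, τ ≠ 0 ∧ (∀ α β' γ : F, β' ≠ 0 → α ^ 2 + α * γ + α * β' + β' ^ 2 * τ + β' * γ ≠ 0) ∧
        MulTbl β ⇑b ![![b 2, 0, b 2], ![b 2, τ • b 2, b 2], ![0, 0, 0]]) ∨
      (∃ δ τ : F, δ ≠ 0 ∧ τ ≠ 0 ∧ (∀ α β' γ : F, β' ≠ 0 → α ^ 2 + α * β' * δ + α * γ + α * β' + β' ^ 2 * τ + β' * γ ≠ 0) ∧
        MulTbl β ⇑b ![![b 2, δ • b 2, b 2], ![b 2, τ • b 2, b 2], ![0, 0, 0]])     := by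
  classical
  have hFD : FiniteDimensional F L := FiniteDimensional.of_finrank_pos (by omega)
  -- Leibniz kernel elements kill on the left
  have hkill : ∀ x ∈ leibKer β, ∀ z : L, β x z = 0 := by
    have h : leibKer β ≤ LinearMap.ker β := by
      rw [leibKer, Submodule.span_le]
      rintro _ ⟨a, rfl⟩
      simp only [SetLike.mem_coe, LinearMap.mem_ker]
      ext z
      rw [hLeib a a z]
      simp
    intro x hx z
    have hx' := h hx
    rw [LinearMap.mem_ker] at hx'
    rw [hx']
    rfl
  -- a generator c of the Leibniz kernel
  obtain ⟨c, hck, hc0⟩ := (Submodule.ne_bot_iff (leibKer β)).mp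
    (by intro h; rw [h] at hk; simp at hk)
  have hspan : leibKer β = Submodule.span F {c} := by
    refine (Submodule.eq_of_le_of_finrank_le
      (Submodule.span_le.mpr (Set.singleton_subset_iff.mpr hck)) ?_).symm
    rw [hk, finrank_span_singleton hc0]
  have hmem : ∀ x y : L, ∃ t : F, t • c = β x y := fun x y =>
    Submodule.mem_span_singleton.mp (hspan ▸ hab x y)
  choose g hg using hmem
  have hcanc : ∀ s t : F, s • c = t • c → s = t := by
    intro s t h
    have h2 : (s - t) • c = 0 := by rw [sub_smul, h, sub_self]
    rcases smul_eq_zero.mp h2 with h3 | h3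
    · exact sub_eq_zero.mp h3
    · exact absurd h3 hc0
  have hstar : ∀ x y z : L, β x (β y z) = β y (β x z) := by
    intro x y z
    have h0 : β (β x y) z = 0 := hkill _ (hab x y) z
    have h1 := hLeib x y z
    rw [h0] at h1
    exact sub_eq_zero.mp h1.symm
  -- bilinearity identities for g
  have hgaddL : ∀ x y z : L, g (x + y) z = g x z + g y z := fun x y z =>
    hcanc _ _ (by rw [add_smul, hg, hg, hg, map_add, LinearMap.add_apply])
  have hgsmulL : ∀ (s : F) (x z : L), g (s • x) z = s * g x z := fun s x z =>
    hcanc _ _ (by rw [mul_smul, hg, hg, map_smul, LinearMap.smul_apply])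
  have hgaddR : ∀ x y z : L, g x (y + z) = g x y + g x z := fun x y z =>
    hcanc _ _ (by rw [add_smul, hg, hg, hg, map_add])
  have hgsmulR : ∀ (s : F) (x z : L), g x (s • z) = s * g x z := fun s x z =>
    hcanc _ _ (by rw [mul_smul, hg, hg, map_smul])
  -- an element e with β e c ≠ 0
  obtain ⟨q, hqk, hqnc⟩ := SetLike.not_le_iff_exists.mp hnsub
  have hq' : ¬ ∀ y : L, β q y = 0 ∧ β y q = 0 := hqnc
  push_neg at hq'
  obtain ⟨e, he⟩ := hq'
  have heq : β e q ≠ 0 := he (hkill q hqk e)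
  obtain ⟨s, hs⟩ := Submodule.mem_span_singleton.mp (hspan ▸ hqk)
  have hec : β e c ≠ 0 := by
    intro h
    apply heq
    rw [← hs, map_smul, h, smul_zero]
  have hpe : g e c ≠ 0 := fun h => hec (by rw [← hg, h, zero_smul])
  -- the rank-one factorization β x z = (Φ x * Ψ z) • c
  set Φ : L →ₗ[F] F :=
    { toFun := fun x => g x c
      map_add' := fun x y => hgaddL x y c
      map_smul' := fun s x => hgsmulL s x c } with hΦdef
  set Ψ : L →ₗ[F] F :=
    { toFun := fun z => (g e c)⁻¹ * g e z
      map_add' := fun x y => by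
        show (g e c)⁻¹ * g e (x + y) = (g e c)⁻¹ * g e x + (g e c)⁻¹ * g e y
        rw [hgaddR]; ring
      map_smul' := fun s x => by
        show (g e c)⁻¹ * g e (s • x) = (RingHom.id F) s * ((g e c)⁻¹ * g e x)
        rw [hgsmulR]; simp only [RingHom.id_apply]; ring }
    with hΨdef
  have hΦapp : ∀ x : L, Φ x = g x c := fun x => rfl
  have hΨapp : ∀ z : L, Ψ z = (g e c)⁻¹ * g e z := fun z => rfl
  have hrk : ∀ x z : L, g x z = Φ x * Ψ z := by
    intro x z
    have h := hstar x e z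
    rw [← hg e z, map_smul, ← hg x z, map_smul, ← hg x c, ← hg e c, smul_smul, smul_smul] at h
    have h2 : g e z * g x c = g x z * g e c := hcanc _ _ h
    rw [hΦapp, hΨapp]
    field_simp
    linear_combination -h2
  have hβf : ∀ x z : L, β x z = (Φ x * Ψ z) • c := fun x z => by rw [← hrk, hg]
  have hΦc : Φ c = 0 := by
    rw [hΦapp]
    refine hcanc _ _ ?_
    rw [hg, hkill c hck c, zero_smul]
  have hΨc : Ψ c = 1 := by rw [hΨapp]; exact inv_mul_cancel₀ hpe
  -- produce a1 with Φ a1 = 1, Ψ a1 ≠ 0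
  obtain ⟨a, ha⟩ := hnotLie
  have hΦΨa : Φ a * Ψ a ≠ 0 := fun h => ha (by rw [hβf, h, zero_smul])
  have hΦa : Φ a ≠ 0 := fun h => hΦΨa (by rw [h, zero_mul])
  have hΨa : Ψ a ≠ 0 := fun h => hΦΨa (by rw [h, mul_zero])
  set a1 : L := (Φ a)⁻¹ • a with ha1def
  have hΦ1 : Φ a1 = 1 := by
    rw [ha1def, map_smul, smul_eq_mul, inv_mul_cancel₀ hΦa]
  have hΨ1 : Ψ a1 ≠ 0 := by
    rw [ha1def, map_smul, smul_eq_mul]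
    exact mul_ne_zero (inv_ne_zero hΦa) hΨa
  set a3 : L := Ψ a1 • c with ha3def
  have hΦ3 : Φ a3 = 0 := by rw [ha3def, map_smul, hΦc, smul_zero]
  have hΨ3 : Ψ a3 = Ψ a1 := by rw [ha3def, map_smul, hΨc, smul_eq_mul, mul_one]
  have ha3ne : a3 ≠ 0 := by
    rw [ha3def]
    exact smul_ne_zero hΨ1 hc0
  -- produce a2 in ker Φ ⊓ ker Ψ, a2 ≠ 0
  have hker : LinearMap.ker (Φ.prod Ψ) ≠ ⊥ := by
    intro h
    have h1 := LinearMap.finrank_range_add_finrank_ker (Φ.prod Ψ)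
    rw [h, finrank_bot, add_zero, hdim] at h1
    have h2 : finrank F ↥(LinearMap.range (Φ.prod Ψ)) ≤ finrank F (F × F) :=
      Submodule.finrank_le _
    rw [Module.finrank_prod, Module.finrank_self] at h2
    omega
  obtain ⟨a2, ha2mem, ha2ne⟩ := (Submodule.ne_bot_iff _).mp hker
  rw [LinearMap.mem_ker, LinearMap.prod_apply, Function.prod, Prod.mk_eq_zero] at ha2mem
  obtain ⟨hΦ2, hΨ2⟩ := ha2mem
  -- the nine brackets
  have e11 : β a1 a1 = a3 := by rw [hβf, hΦ1, one_mul, ha3def]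
  have e12 : β a1 a2 = 0 := by rw [hβf, hΨ2, mul_zero, zero_smul]
  have e13 : β a1 a3 = a3 := by rw [hβf, hΦ1, hΨ3, one_mul, ha3def]
  have e2 : ∀ z : L, β a2 z = 0 := fun z => by rw [hβf, hΦ2, zero_mul, zero_smul]
  have e3 : ∀ z : L, β a3 z = 0 := fun z => by rw [hβf, hΦ3, zero_mul, zero_smul]
  -- linear independence
  have hli : LinearIndependent F ![a1, a2, a3] := by
    rw [Fintype.linearIndependent_iff]
    intro t ht
    rw [Fin.sum_univ_three] at ht
    simp only [Matrix.cons_val_zero, Matrix.cons_val_one, Matrix.head_cons,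
      Matrix.cons_val_two, Matrix.tail_cons] at ht
    have h1 : t 0 = 0 := by
      have hΦt := congrArg Φ ht
      simp only [map_add, map_smul, hΦ1, hΦ2, hΦ3, smul_eq_mul, mul_one, mul_zero,
        add_zero, map_zero] at hΦt
      exact hΦt
    have h3 : t 2 = 0 := by
      have hΨt := congrArg Ψ ht
      simp only [map_add, map_smul, hΨ2, hΨ3, smul_eq_mul, mul_zero, add_zero, zero_add,
        map_zero, h1, zero_mul] at hΨt
      rcases mul_eq_zero.mp hΨt with h | h
      · exact h
      · exact absurd h hΨ1
    have h2 : t 1 = 0 := by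
      rw [h1, h3, zero_smul, zero_smul, zero_add, add_zero] at ht
      rcases smul_eq_zero.mp ht with h | h
      · exact h
      · exact absurd h ha2ne
    intro i
    fin_cases i
    · exact h1
    · exact h2
    · exact h3
  have hcard : Fintype.card (Fin 3) = finrank F L := by
    rw [hdim, Fintype.card_fin]
  refine ⟨basisOfLinearIndependentOfCardEqFinrank hli hcard, Or.inl ?_⟩
  have hbe : ⇑(basisOfLinearIndependentOfCardEqFinrank hli hcard) = ![a1, a2, a3] :=
    coe_basisOfLinearIndependentOfCardEqFinrank hli hcard
  intro i j
  fin_cases i <;> fin_cases j <;>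
    simp [hbe, e11, e12, e13, e2, e3, Matrix.vecHead, Matrix.vecTail]
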